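/- For Talagrand's first pathological submeasure ψ one has ψ(𝒯) = η(1)^{α(1)} = 2^{2500/216}. -/

import Mathlib

noncomputable section

/-- 𝒯 = ∏_{n∈ℕ} [2^n]  (the paper's index `n ∈ {1,2,…}` is the Lean index `n+1`). -/
abbrev Tal : Type := (n : ℕ) → Fin (2 ^ (n + 1))

/-- `S_{n,τ} = {f ∈ 𝒯 : f(n) ≠ τ}`. -/
def Sset (n : ℕ) (τ : Fin (2 ^ (n + 1))) : Set Tal := {f | f n ≠ τ}

/-- The 𝒟-set `⋂_{n ∈ I} S_{n, t n}` with (nonempty, finite) index set `I`;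
only the values of `t` on `I` matter. -/
def DSet (I : Finset ℕ) (t : (n : ℕ) → Fin (2 ^ (n + 1))) : Set Tal :=
  {f | ∀ n ∈ I, f n ≠ t n}

/-- `η(k) = 2^{2500 k⁴}`. -/
def ηT (k : ℕ) : ℕ := 2 ^ (2500 * k ^ 4)

/-- `α(k) = (k+5)^{-3}`. -/
def αT (k : ℕ) : ℝ := (((k : ℝ) + 5) ^ 3)⁻¹

/-- `δ(m) = min {n ∈ ℕ : η(n) ≥ m}` (with `ℕ = {1,2,…}`). -/
def δT (m : ℕ) : ℕ := sInf {n : ℕ | 1 ≤ n ∧ m ≤ ηT n}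

/-- `w(n) = 2^{-δ(n)} (η(δ(n))/n)^{α(δ(n))}`. -/
def wT (n : ℕ) : ℝ :=
  (2 : ℝ) ^ (-(δT n : ℤ)) * ((ηT (δT n) : ℝ) / (n : ℝ)) ^ (αT (δT n))

/-- Membership in Talagrand's family 𝒟 for a triple `(X, I, w)`:  for some `k ∈ {1,2,…}`,
`X` is a 𝒟-set with index set `I`, `1 ≤ |I| ≤ η(k)`, and `w = 2^{-k}(η(k)/|I|)^{α(k)}`. -/
def memD (p : Set Tal × Finset ℕ × ℝ) : Prop :=
  ∃ k : ℕ, 1 ≤ k ∧ (∃ t : (n : ℕ) → Fin (2 ^ (n + 1)), p.1 = DSet p.2.1 t) ∧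
    p.2.1.Nonempty ∧ p.2.1.card ≤ ηT k ∧
    p.2.2 = (2 : ℝ) ^ (-(k : ℤ)) * ((ηT k : ℝ) / (p.2.1.card : ℝ)) ^ (αT k)

/-- Talagrand's first pathological submeasure:
`ψ(B) = inf { w(Y) : Y ⊆ 𝒟 finite, B ⊆ ⋃ Y }`. -/
def ψT (B : Set Tal) : ℝ :=
  sInf {r : ℝ | ∃ Y : Finset (Set Tal × Finset ℕ × ℝ), (∀ p ∈ Y, memD p) ∧
    B ⊆ (⋃ p ∈ Y, p.1) ∧ r = ∑ p ∈ Y, p.2.2}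

end

noncomputable section StatementFiveAux

lemma ηT_pos' (k : ℕ) : (0 : ℝ) < ((ηT k : ℕ) : ℝ) := by
  have : 0 < ηT k := by unfold ηT; positivity
  exact_mod_cast this

lemma W_eq' : ((ηT 1 : ℕ) : ℝ) ^ (αT 1) = (2 : ℝ) ^ ((2500 : ℝ) / 216) := by
  have h1 : ((ηT 1 : ℕ) : ℝ) = (2 : ℝ) ^ ((2500 : ℕ) : ℝ) := by
    rw [Real.rpow_natCast, ηT, Nat.cast_pow, Nat.cast_ofNat, one_pow, mul_one]
  have h2 : αT 1 = (216 : ℝ)⁻¹ := by norm_num [αT]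
  rw [h1, h2, ← Real.rpow_mul (by norm_num)]
  norm_num

lemma eta_rpow' (k : ℕ) : ((ηT k : ℕ) : ℝ) ^ (αT k) =
    (2 : ℝ) ^ ((2500 * (k : ℝ) ^ 4) * αT k) := by
  have h1 : ((ηT k : ℕ) : ℝ) = (2 : ℝ) ^ (((2500 * k ^ 4 : ℕ)) : ℝ) := by
    rw [Real.rpow_natCast]; norm_num [ηT]
  rw [h1, ← Real.rpow_mul (by norm_num)]
  push_cast
  ring_nf

lemma two_zpow' (k : ℕ) : (2 : ℝ) ^ (-(k : ℤ)) = (2 : ℝ) ^ (-(k : ℝ)) := by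
  rw [← Real.rpow_intCast]
  push_cast
  ring_nf

lemma W_pos' : (0 : ℝ) < ((ηT 1 : ℕ) : ℝ) ^ (αT 1) := Real.rpow_pos_of_pos (ηT_pos' 1) _

lemma key' (k m : ℕ) (hk : 1 ≤ k) (hm : 1 ≤ m) :
    ((ηT 1 : ℕ) : ℝ) ^ (αT 1) ≤
      ((m : ℝ) + 1) * ((2 : ℝ) ^ (-(k : ℤ)) * ((ηT k : ℝ) / (m : ℝ)) ^ (αT k)) := by
  have hm1 : (1 : ℝ) ≤ (m : ℝ) := by exact_mod_cast hm
  have hm0 : (0 : ℝ) < (m : ℝ) := by linarith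
  have hηpos : (0 : ℝ) < (ηT k : ℝ) := ηT_pos' k
  have hdiv : ((ηT k : ℝ) / (m : ℝ)) ^ (αT k)
      = ((ηT k : ℝ)) ^ (αT k) / ((m : ℝ)) ^ (αT k) :=
    Real.div_rpow (le_of_lt hηpos) (le_of_lt hm0) _
  rcases eq_or_lt_of_le hk with hk1 | hk2
  · subst hk1
    have hα : αT 1 = (216 : ℝ)⁻¹ := by norm_num [αT]
    set E : ℝ := ((ηT 1 : ℕ) : ℝ) ^ (αT 1) with hE
    have hEpos : 0 < E := W_pos'
    set t : ℝ := (m : ℝ) ^ (αT 1) with htdef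
    have htpos : 0 < t := Real.rpow_pos_of_pos hm0 _
    have hts : t ≤ (m : ℝ) ^ ((2 : ℝ)⁻¹) :=
      Real.rpow_le_rpow_of_exponent_le hm1 (by rw [hα]; norm_num)
    have hs0 : 0 ≤ (m : ℝ) ^ ((2 : ℝ)⁻¹) := Real.rpow_nonneg (le_of_lt hm0) _
    have hssq : ((m : ℝ) ^ ((2 : ℝ)⁻¹)) ^ (2 : ℕ) = (m : ℝ) := by
      rw [← Real.rpow_natCast ((m : ℝ) ^ ((2:ℝ)⁻¹)) 2, ← Real.rpow_mul (le_of_lt hm0)]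
      norm_num
    have h2t : 2 * t ≤ (m : ℝ) + 1 := by
      nlinarith [sq_nonneg ((m : ℝ) ^ ((2 : ℝ)⁻¹) - 1)]
    have hz : (2 : ℝ) ^ (-((1 : ℕ) : ℤ)) = 2⁻¹ := by norm_num
    rw [hz, hdiv]
    have hfe : 2 * t * (2⁻¹ * (E / t)) = E := by field_simp
    calc E = 2 * t * (2⁻¹ * (E / t)) := hfe.symm
      _ ≤ ((m : ℝ) + 1) * (2⁻¹ * (E / t)) := by
          apply mul_le_mul_of_nonneg_right h2t
          have hEt : 0 < E / t := div_pos hEpos htpos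
          nlinarith
  · have hk2' : (2 : ℝ) ≤ (k : ℝ) := by exact_mod_cast hk2
    have hαle : αT k ≤ 1 := by
      unfold αT
      apply inv_le_one_of_one_le₀
      have h7 : (1 : ℝ) ≤ (k : ℝ) + 5 := by linarith
      calc (1 : ℝ) = 1 ^ 3 := by norm_num
        _ ≤ ((k : ℝ) + 5) ^ 3 := pow_le_pow_left₀ (by norm_num) h7 3
    have hmle : (m : ℝ) ^ (αT k) ≤ (m : ℝ) + 1 := by
      calc (m : ℝ) ^ (αT k) ≤ (m : ℝ) ^ (1 : ℝ) :=
            Real.rpow_le_rpow_of_exponent_le hm1 hαle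
        _ = (m : ℝ) := Real.rpow_one _
        _ ≤ (m : ℝ) + 1 := by linarith
    have htpos : 0 < (m : ℝ) ^ (αT k) := Real.rpow_pos_of_pos hm0 _
    have hinv : ((m : ℝ) + 1)⁻¹ ≤ ((m : ℝ) ^ (αT k))⁻¹ :=
      inv_anti₀ htpos hmle
    have h5 : (0 : ℝ) < ((k : ℝ) + 5) ^ 3 := by positivity
    have key2 : ((2500 : ℝ) / 216 + (k : ℝ)) * ((k : ℝ) + 5) ^ 3 ≤ 2500 * (k : ℝ) ^ 4 := by
      have h1 : (k : ℝ) + 5 ≤ 4 * (k : ℝ) := by linarith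
      have h2 : (2500 : ℝ) / 216 + (k : ℝ) ≤ 7 * (k : ℝ) := by nlinarith
      calc ((2500 : ℝ) / 216 + (k : ℝ)) * ((k : ℝ) + 5) ^ 3
          ≤ (7 * (k : ℝ)) * (4 * (k : ℝ)) ^ 3 := by
            apply mul_le_mul h2 (pow_le_pow_left₀ (by linarith) h1 3) (by positivity) (by positivity)
        _ = 448 * (k : ℝ) ^ 4 := by ring
        _ ≤ 2500 * (k : ℝ) ^ 4 := by nlinarith [pow_pos (show (0:ℝ) < (k:ℝ) by linarith) 4]
    have hexp : (2500 : ℝ) / 216 ≤ (2500 * (k : ℝ) ^ 4) * αT k + (-(k : ℝ)) := by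
      have h6 : (2500 : ℝ) / 216 + (k : ℝ) ≤ 2500 * (k : ℝ) ^ 4 / (((k : ℝ) + 5) ^ 3) :=
        (le_div_iff₀ h5).mpr key2
      unfold αT
      rw [← div_eq_mul_inv]
      linarith
    have hpow : ((ηT 1 : ℕ) : ℝ) ^ (αT 1) ≤ (2 : ℝ) ^ (-(k : ℤ)) * ((ηT k : ℝ)) ^ (αT k) := by
      rw [W_eq', eta_rpow', two_zpow']
      rw [mul_comm, ← Real.rpow_add (by norm_num)]
      exact Real.rpow_le_rpow_of_exponent_le (by norm_num) hexp
    have hzpos : (0 : ℝ) < (2 : ℝ) ^ (-(k : ℤ)) := by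
      rw [two_zpow']; exact Real.rpow_pos_of_pos (by norm_num) _
    have hEpos : 0 < ((ηT k : ℝ)) ^ (αT k) := Real.rpow_pos_of_pos hηpos _
    have hm1p : (0 : ℝ) < (m : ℝ) + 1 := by linarith
    have e : ((m : ℝ) + 1) * ((2 : ℝ) ^ (-(k : ℤ)) * (((ηT k : ℝ)) ^ (αT k) * ((m : ℝ) + 1)⁻¹))
        = (2 : ℝ) ^ (-(k : ℤ)) * ((ηT k : ℝ)) ^ (αT k) := by
      field_simp
    calc ((ηT 1 : ℕ) : ℝ) ^ (αT 1)
        ≤ (2 : ℝ) ^ (-(k : ℤ)) * ((ηT k : ℝ)) ^ (αT k) := hpow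
      _ = ((m : ℝ) + 1) * ((2 : ℝ) ^ (-(k : ℤ)) * (((ηT k : ℝ)) ^ (αT k) * ((m : ℝ) + 1)⁻¹)) := e.symm
      _ ≤ ((m : ℝ) + 1) * ((2 : ℝ) ^ (-(k : ℤ)) * (((ηT k : ℝ)) ^ (αT k) * ((m : ℝ) ^ (αT k))⁻¹)) := by
          apply mul_le_mul_of_nonneg_left _ (le_of_lt hm1p)
          apply mul_le_mul_of_nonneg_left _ (le_of_lt hzpos)
          exact mul_le_mul_of_nonneg_left hinv (le_of_lt hEpos)
      _ = ((m : ℝ) + 1) * ((2 : ℝ) ^ (-(k : ℤ)) * ((ηT k : ℝ) / (m : ℝ)) ^ (αT k)) := by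
          rw [hdiv, div_eq_mul_inv]

lemma weight_pos' {p : Set Tal × Finset ℕ × ℝ} (hp : memD p) : 0 < p.2.2 := by
  obtain ⟨k, hk, ht, hne, hcard, hw⟩ := hp
  rw [hw]
  have h2 : (0 : ℝ) < (p.2.1.card : ℝ) := by exact_mod_cast hne.card_pos
  have hz : (0 : ℝ) < (2 : ℝ) ^ (-(k : ℤ)) := by
    rw [two_zpow']; exact Real.rpow_pos_of_pos (by norm_num) _
  exact mul_pos hz (Real.rpow_pos_of_pos (div_pos (ηT_pos' k) h2) _)

lemma lower_bound' (Y : Finset (Set Tal × Finset ℕ × ℝ)) (hY : ∀ p ∈ Y, memD p)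
    (hcov : (Set.univ : Set Tal) ⊆ ⋃ p ∈ Y, p.1) :
    ((ηT 1 : ℕ) : ℝ) ^ (αT 1) ≤ ∑ p ∈ Y, p.2.2 := by
  classical
  by_contra hlt
  push_neg at hlt
  set W : ℝ := ((ηT 1 : ℕ) : ℝ) ^ (αT 1) with hW
  choose k hK using fun p : {p // p ∈ Y} => hY p.1 p.2
  choose t ht using fun p : {p // p ∈ Y} => (hK p).2.1
  have hk : ∀ p : {p // p ∈ Y}, 1 ≤ k p := fun p => (hK p).1
  have hne : ∀ p : {p // p ∈ Y}, p.1.2.1.Nonempty := fun p => (hK p).2.2.1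
  have hw : ∀ p : {p // p ∈ Y}, p.1.2.2 =
      (2 : ℝ) ^ (-(k p : ℤ)) * ((ηT (k p) : ℝ) / (p.1.2.1.card : ℝ)) ^ (αT (k p)) :=
    fun p => (hK p).2.2.2.2
  have hwpos : ∀ p : {p // p ∈ Y}, 0 < p.1.2.2 := fun p => weight_pos' (hY p.1 p.2)
  -- Hall condition
  have hall : ∀ s : Finset {p // p ∈ Y}, s.card ≤ (s.biUnion fun p => p.1.2.1).card := by
    intro s
    rcases s.eq_empty_or_nonempty with rfl | hs
    · simp
    set u := (s.biUnion fun p => p.1.2.1).card with hu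
    have hkey : ∀ p ∈ s, W / ((u : ℝ) + 1) ≤ p.1.2.2 := by
      intro p hp
      have hm1 : 1 ≤ p.1.2.1.card := (hne p).card_pos
      have hmu : p.1.2.1.card ≤ u :=
        Finset.card_le_card (fun x hx => Finset.mem_biUnion.2 ⟨p, hp, hx⟩)
      have hstep : W ≤ ((u : ℝ) + 1) * p.1.2.2 := by
        rw [hw p]
        calc W ≤ ((p.1.2.1.card : ℝ) + 1) *
              ((2 : ℝ) ^ (-(k p : ℤ)) * ((ηT (k p) : ℝ) / (p.1.2.1.card : ℝ)) ^ (αT (k p))) :=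
              key' (k p) p.1.2.1.card (hk p) hm1
          _ ≤ ((u : ℝ) + 1) *
              ((2 : ℝ) ^ (-(k p : ℤ)) * ((ηT (k p) : ℝ) / (p.1.2.1.card : ℝ)) ^ (αT (k p))) := by
              apply mul_le_mul_of_nonneg_right
              · have : (p.1.2.1.card : ℝ) ≤ (u : ℝ) := by exact_mod_cast hmu
                linarith
              · have := hwpos p
                rw [hw p] at this
                linarith
      have hu1 : (0 : ℝ) < (u : ℝ) + 1 := by positivity
      rw [div_le_iff₀ hu1]
      linarith [hstep, mul_comm ((u : ℝ) + 1) p.1.2.2]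
    have hsum1 : (s.card : ℝ) * (W / ((u : ℝ) + 1)) ≤ ∑ p ∈ s, p.1.2.2 := by
      calc (s.card : ℝ) * (W / ((u : ℝ) + 1)) = ∑ _p ∈ s, W / ((u : ℝ) + 1) := by
            rw [Finset.sum_const, nsmul_eq_mul]
        _ ≤ ∑ p ∈ s, p.1.2.2 := Finset.sum_le_sum hkey
    have hsum2 : ∑ p ∈ s, p.1.2.2 ≤ ∑ p ∈ Y, p.2.2 := by
      calc ∑ p ∈ s, p.1.2.2 ≤ ∑ p ∈ Y.attach, p.1.2.2 :=
            Finset.sum_le_sum_of_subset_of_nonneg (fun x _ => Finset.mem_attach Y x)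
              (fun p _ _ => le_of_lt (hwpos p))
        _ = ∑ p ∈ Y, p.2.2 := Finset.sum_attach Y (fun q => q.2.2)
    have hcardlt : (s.card : ℝ) < (u : ℝ) + 1 := by
      by_contra hcon
      push_neg at hcon
      have hu1 : (0 : ℝ) < (u : ℝ) + 1 := by positivity
      have hWu : 0 < W / ((u : ℝ) + 1) := div_pos W_pos' hu1
      have : W ≤ (s.card : ℝ) * (W / ((u : ℝ) + 1)) := by
        calc W = ((u : ℝ) + 1) * (W / ((u : ℝ) + 1)) := by field_simp
          _ ≤ (s.card : ℝ) * (W / ((u : ℝ) + 1)) :=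
              mul_le_mul_of_nonneg_right hcon (le_of_lt hWu)
      linarith
    have : s.card < u + 1 := by exact_mod_cast hcardlt
    omega
  obtain ⟨f, hfinj, hf⟩ :=
    (Finset.all_card_le_biUnion_card_iff_exists_injective (fun p : {p // p ∈ Y} => p.1.2.1)).mp hall
  -- construct an uncovered point
  let g : Tal := fun n =>
    if h : ∃ p : {p // p ∈ Y}, f p = n then
      (h.choose.1.2.1, t h.choose) |>.2 n
    else ⟨0, by positivity⟩
  have hg : ∀ p : {p // p ∈ Y}, g (f p) = t p (f p) := by
    intro p
    have hex : ∃ q : {p // p ∈ Y}, f q = f p := ⟨p, rfl⟩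
    have : g (f p) = t hex.choose (f p) := by
      simp only [g, dif_pos hex]
    rw [this, hfinj hex.choose_spec]
  have hgU : g ∈ ⋃ p ∈ Y, p.1 := hcov (Set.mem_univ g)
  rw [Set.mem_iUnion₂] at hgU
  obtain ⟨p, hpY, hgp⟩ := hgU
  have hgp' : g ∈ DSet p.2.1 (t ⟨p, hpY⟩) := by
    rw [← ht ⟨p, hpY⟩]
    exact hgp
  exact hgp' (f ⟨p, hpY⟩) (hf ⟨p, hpY⟩) (hg ⟨p, hpY⟩)

lemma upper_mem' : ∃ Y : Finset (Set Tal × Finset ℕ × ℝ), (∀ p ∈ Y, memD p) ∧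
    (Set.univ : Set Tal) ⊆ (⋃ p ∈ Y, p.1) ∧
    ((ηT 1 : ℕ) : ℝ) ^ (αT 1) = ∑ p ∈ Y, p.2.2 := by
  classical
  set t0 : (n : ℕ) → Fin (2 ^ (n + 1)) := fun n => ⟨0, by positivity⟩ with ht0
  set t1 : (n : ℕ) → Fin (2 ^ (n + 1)) := fun n => ⟨1, by
    have : (2 : ℕ) ≤ 2 ^ (n + 1) := by
      calc (2 : ℕ) = 2 ^ 1 := by norm_num
        _ ≤ 2 ^ (n + 1) := Nat.pow_le_pow_right (by norm_num) (by omega)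
    omega⟩ with ht1
  set c : ℝ := (2 : ℝ) ^ (-((1 : ℕ) : ℤ)) * ((ηT 1 : ℝ) / ((1 : ℕ) : ℝ)) ^ (αT 1) with hc
  set p0 : Set Tal × Finset ℕ × ℝ := (DSet {0} t0, ({0} : Finset ℕ), c) with hp0
  set p1 : Set Tal × Finset ℕ × ℝ := (DSet {0} t1, ({0} : Finset ℕ), c) with hp1
  have ht01 : t0 0 ≠ t1 0 := by
    simp only [ht0, ht1]
    intro h
    have := Fin.mk.injEq 0 _ 1 _ ▸ h
    simp [Fin.ext_iff] at h
  have hne01 : p0 ≠ p1 := by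
    intro h
    have h1 : DSet {0} t0 = DSet {0} t1 := congrArg Prod.fst h
    have hg : t0 ∈ DSet {0} t1 := by
      intro n hn
      simp only [Finset.mem_singleton] at hn
      subst hn
      exact ht01
    rw [← h1] at hg
    exact hg 0 (Finset.mem_singleton_self 0) rfl
  refine ⟨{p0, p1}, ?_, ?_, ?_⟩
  · intro p hp
    have hmem : ∀ t : (n : ℕ) → Fin (2 ^ (n + 1)),
        memD (DSet {0} t, ({0} : Finset ℕ), c) := by
      intro t
      refine ⟨1, le_refl 1, ⟨t, rfl⟩, ⟨0, Finset.mem_singleton_self 0⟩, ?_, ?_⟩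
      · simp only [Finset.card_singleton]
        have : 0 < ηT 1 := by unfold ηT; positivity
        omega
      · exact hc
    rcases Finset.mem_insert.mp hp with rfl | hp
    · exact hmem t0
    · rw [Finset.mem_singleton.mp hp]
      exact hmem t1
  · intro f _
    rw [Set.mem_iUnion₂]
    by_cases h : f 0 = t0 0
    · refine ⟨p1, by simp, ?_⟩
      intro n hn
      simp only [Finset.mem_singleton] at hn
      subst hn
      rw [h]
      exact ht01
    · refine ⟨p0, by simp, ?_⟩
      intro n hn
      simp only [Finset.mem_singleton] at hn
      subst hn
      exact h
  · rw [Finset.sum_pair hne01]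
    show ((ηT 1 : ℕ) : ℝ) ^ (αT 1) = c + c
    have hc' : c = 2⁻¹ * ((ηT 1 : ℕ) : ℝ) ^ (αT 1) := by
      rw [hc]
      simp only [Nat.cast_one, div_one, zpow_neg, zpow_one]
    rw [hc']
    ring

end StatementFiveAux

/-- `ψ(𝒯) = η(1)^{α(1)} = 2^{2500/216}`. -/
theorem statement5 :
    ψT Set.univ = (ηT 1 : ℝ) ^ (αT 1) ∧
      (ηT 1 : ℝ) ^ (αT 1) = (2 : ℝ) ^ ((2500 : ℝ) / 216) := by
  constructor
  · unfold ψT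
    apply le_antisymm
    · apply csInf_le
      · exact ⟨((ηT 1 : ℕ) : ℝ) ^ (αT 1), fun r hr => by
          obtain ⟨Y, h1, h2, rfl⟩ := hr
          exact lower_bound' Y h1 h2⟩
      · obtain ⟨Y, h1, h2, h3⟩ := upper_mem'
        exact ⟨Y, h1, h2, h3⟩
    · apply le_csInf
      · obtain ⟨Y, h1, h2, h3⟩ := upper_mem'
        exact ⟨_, Y, h1, h2, h3⟩
      · intro r hr
        obtain ⟨Y, h1, h2, rfl⟩ := hr
        exact lower_bound' Y h1 h2
  · exact W_eq'
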